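/- Let k ≥ 1 and c ∈ ℂ. Define the 2k × 2k matrix P(c) by P(c)_{i,j} = binom(j−1, i−1)·c^{j−i} if i ≤ j and 0 otherwise (indices 1 ≤ i, j ≤ 2k), and define the 2k × 2k matrix P*(c) as the block-diagonal matrix with two identical k × k diagonal blocks whose entries are binom(j−1, i−1)·c^{j−i} for i ≤ j and 0 otherwise (1 ≤ i, j ≤ k). Then for all z1, z2, z3 ∈ ℂ: M(z1+c, z2+c, z3+c) = P(c)ᵀ · M(z1,z2,z3) · P*(c). Moreover P(c) and P*(c) are upper triangular with all diagonal entries equal to 1, so det P(c) = det P*(c) = 1. -/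

import Mathlib

open Finset intervalIntegral

/-- Fundamental theorem of calculus along a segment: the "monomial integral". -/
lemma Jlem_aux (y d : ℂ) (p : ℕ) :
    ∫ t in (0:ℝ)..1, (y + t • d)^p * d = ((y+d)^(p+1) - y^(p+1)) / ((p+1 : ℕ) : ℂ) := by
  have hder : ∀ t ∈ Set.uIcc (0:ℝ) 1,
      HasDerivAt (fun t : ℝ => (y + t • d)^(p+1) / ((p+1:ℕ):ℂ)) ((y + t • d)^p * d) t := by
    intro t _
    have h1 : HasDerivAt (fun t : ℝ => y + t • d) d t := by
      simpa using ((hasDerivAt_id t).smul_const d).const_add y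
    have h2 : HasDerivAt (fun z : ℂ => z ^ (p+1)) (((p+1:ℕ):ℂ) * (y + t • d)^p) (y + t • d) := by
      simpa using hasDerivAt_pow (p+1) (y + t • d)
    have h3 := h2.scomp t h1
    have h4 := h3.div_const ((p+1:ℕ):ℂ)
    convert h4 using 1
    · rfl
    · rfl
    simp only [smul_eq_mul]
    have hne : (((p+1:ℕ)):ℂ) ≠ 0 := Nat.cast_ne_zero.mpr (Nat.succ_ne_zero p)
    push_cast at hne ⊢
    field_simp
  have hint : IntervalIntegrable (fun t : ℝ => (y + t • d)^p * d) MeasureTheory.volume 0 1 := by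
    apply Continuous.intervalIntegrable
    fun_prop
  have := integral_eq_sub_of_hasDerivAt hder hint
  rw [this]
  simp
  ring

/-- The key algebraic identity, proved by integrating the binomial expansion of
`((z+c))^n ((z+c))^m` along the segment from `y` to `x`. -/
lemma key_aux (x y c : ℂ) (n m : ℕ) :
    ((x+c)^(n+m+1) - (y+c)^(n+m+1)) / ((n+m+1:ℕ):ℂ)
    = ∑ a ∈ range (n+1), ∑ b ∈ range (m+1),
        ((n.choose a : ℕ) : ℂ) * c^(n-a) *
        ((x^(a+b+1) - y^(a+b+1)) / ((a+b+1:ℕ):ℂ)) *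
        (((m.choose b : ℕ) : ℂ) * c^(m-b)) := by
  set d := x - y with hd
  have hx : x = y + d := by ring
  have L : ((x+c)^(n+m+1) - (y+c)^(n+m+1)) / ((n+m+1:ℕ):ℂ)
      = ∫ t in (0:ℝ)..1, (y + c + t • d)^(n+m) * d := by
    rw [Jlem_aux (y+c) d (n+m)]
    have h : y + c + d = x + c := by rw [hx]; ring
    rw [h]
  have hpt : ∀ t : ℝ, (y + c + t • d)^(n+m) * d
      = ∑ p ∈ range (n+1) ×ˢ range (m+1),
          (((n.choose p.1 : ℕ):ℂ) * c^(n-p.1) * (((m.choose p.2 : ℕ):ℂ) * c^(m-p.2))) *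
          ((y + t • d)^(p.1+p.2) * d) := by
    intro t
    have hz : y + c + t • d = (y + t • d) + c := by ring
    rw [hz, pow_add, add_pow, add_pow, sum_mul_sum, sum_product, sum_mul]
    apply sum_congr rfl; intro a _
    rw [sum_mul]
    apply sum_congr rfl; intro b _
    rw [pow_add]; ring
  have hint : ∀ p ∈ range (n+1) ×ˢ range (m+1), IntervalIntegrable
      (fun t : ℝ => (((n.choose p.1 : ℕ):ℂ) * c^(n-p.1) * (((m.choose p.2 : ℕ):ℂ) * c^(m-p.2))) *
          ((y + t • d)^(p.1+p.2) * d)) MeasureTheory.volume 0 1 := by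
    intro p _
    apply Continuous.intervalIntegrable
    fun_prop
  rw [L]
  calc (∫ t in (0:ℝ)..1, (y + c + t • d)^(n+m) * d)
      = ∫ t in (0:ℝ)..1, ∑ p ∈ range (n+1) ×ˢ range (m+1),
          (((n.choose p.1 : ℕ):ℂ) * c^(n-p.1) * (((m.choose p.2 : ℕ):ℂ) * c^(m-p.2))) *
          ((y + t • d)^(p.1+p.2) * d) := by
        apply intervalIntegral.integral_congr; intro t _; exact hpt t
    _ = ∑ p ∈ range (n+1) ×ˢ range (m+1),
          ∫ t in (0:ℝ)..1, (((n.choose p.1 : ℕ):ℂ) * c^(n-p.1) * (((m.choose p.2 : ℕ):ℂ) * c^(m-p.2))) *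
          ((y + t • d)^(p.1+p.2) * d) := intervalIntegral.integral_finset_sum hint
    _ = ∑ a ∈ range (n+1), ∑ b ∈ range (m+1),
        ((n.choose a : ℕ) : ℂ) * c^(n-a) *
        ((x^(a+b+1) - y^(a+b+1)) / ((a+b+1:ℕ):ℂ)) *
        (((m.choose b : ℕ) : ℂ) * c^(m-b)) := by
        rw [sum_product]
        apply sum_congr rfl; intro a _
        apply sum_congr rfl; intro b _
        rw [intervalIntegral.integral_const_mul, Jlem_aux y d (a+b), ← hx]
        ring



/-- The `2k × 2k` matrix `M(z1, z2, z3)` of Mirebeau: for `1 ≤ i ≤ 2k` and `1 ≤ j ≤ k`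
(here written with 0-based indices), `M_{i,j} = (z2^{i+j-1} - z1^{i+j-1})/(i+j-1)` and
`M_{i,j+k} = (z3^{i+j-1} - z1^{i+j-1})/(i+j-1)`. -/
noncomputable def Mmat (k : ℕ) (z1 z2 z3 : ℂ) : Matrix (Fin (2 * k)) (Fin (2 * k)) ℂ :=
  Matrix.of fun i j =>
    if (j : ℕ) < k then
      (z2 ^ ((i : ℕ) + (j : ℕ) + 1) - z1 ^ ((i : ℕ) + (j : ℕ) + 1)) /
        (((i : ℕ) + (j : ℕ) + 1 : ℕ) : ℂ)
    else
      (z3 ^ ((i : ℕ) + ((j : ℕ) - k) + 1) - z1 ^ ((i : ℕ) + ((j : ℕ) - k) + 1)) /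
        (((i : ℕ) + ((j : ℕ) - k) + 1 : ℕ) : ℂ)

/-- The change-of-basis matrix `P(c)` on `ℂ_{2k-1}`: with 0-based indices,
`P(c)_{i,j} = binom(j, i) c^{j-i}` for `i ≤ j` and `0` otherwise. -/
noncomputable def Pmat (k : ℕ) (c : ℂ) : Matrix (Fin (2 * k)) (Fin (2 * k)) ℂ :=
  Matrix.of fun i j =>
    if (i : ℕ) ≤ (j : ℕ) then ((Nat.choose (j : ℕ) (i : ℕ) : ℕ) : ℂ) * c ^ ((j : ℕ) - (i : ℕ))
    else 0

/-- Entry of the `k × k` diagonal block used in `P*(c)`. -/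
noncomputable def Pblock (c : ℂ) (a b : ℕ) : ℂ :=
  if a ≤ b then ((Nat.choose b a : ℕ) : ℂ) * c ^ (b - a) else 0

/-- The block-diagonal change-of-basis matrix `P*(c)` on `ℂ_{k-1} × ℂ_{k-1}`, with two
identical `k × k` diagonal blocks. -/
noncomputable def Pstar (k : ℕ) (c : ℂ) : Matrix (Fin (2 * k)) (Fin (2 * k)) ℂ :=
  Matrix.of fun i j =>
    if (i : ℕ) < k ∧ (j : ℕ) < k then Pblock c (i : ℕ) (j : ℕ)
    else if k ≤ (i : ℕ) ∧ k ≤ (j : ℕ) then Pblock c ((i : ℕ) - k) ((j : ℕ) - k)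
    else 0

theorem Mmat_change_of_basis (k : ℕ) (hk : 1 ≤ k) (c : ℂ) (z1 z2 z3 : ℂ) :
    Mmat k (z1 + c) (z2 + c) (z3 + c) =
      (Pmat k c).transpose * Mmat k z1 z2 z3 * Pstar k c
    ∧ (∀ i j : Fin (2 * k), (j : ℕ) < (i : ℕ) → Pmat k c i j = 0)
    ∧ (∀ i : Fin (2 * k), Pmat k c i i = 1)
    ∧ (∀ i j : Fin (2 * k), (j : ℕ) < (i : ℕ) → Pstar k c i j = 0)
    ∧ (∀ i : Fin (2 * k), Pstar k c i i = 1)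
    ∧ Matrix.det (Pmat k c) = 1 ∧ Matrix.det (Pstar k c) = 1 := by
  have hPlow : ∀ i j : Fin (2 * k), (j : ℕ) < (i : ℕ) → Pmat k c i j = 0 := by
    intro i j h
    simp only [Pmat, Matrix.of_apply]
    rw [if_neg (by omega)]
  have hPdiag : ∀ i : Fin (2 * k), Pmat k c i i = 1 := by
    intro i
    simp [Pmat]
  have hSlow : ∀ i j : Fin (2 * k), (j : ℕ) < (i : ℕ) → Pstar k c i j = 0 := by
    intro i j h
    simp only [Pstar, Pblock, Matrix.of_apply]
    split_ifs <;> first | rfl | omega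
  have hSdiag : ∀ i : Fin (2 * k), Pstar k c i i = 1 := by
    intro i
    have hi := i.isLt
    simp only [Pstar, Pblock, Matrix.of_apply]
    by_cases h : (i:ℕ) < k
    · rw [if_pos ⟨h, h⟩, if_pos le_rfl, Nat.choose_self]; simp
    · rw [if_neg (by tauto), if_pos ⟨by omega, by omega⟩, if_pos le_rfl, Nat.choose_self]; simp
  have hPdet : Matrix.det (Pmat k c) = 1 := by
    rw [Matrix.det_of_upperTriangular (by intro i j h; exact hPlow i j h)]
    simp [hPdiag]
  have hSdet : Matrix.det (Pstar k c) = 1 := by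
    rw [Matrix.det_of_upperTriangular (by intro i j h; exact hSlow i j h)]
    simp [hSdiag]
  refine ⟨?_, hPlow, hPdiag, hSlow, hSdiag, hPdet, hSdet⟩
  ext i j
  rw [Matrix.mul_apply]
  simp only [Matrix.mul_apply, Matrix.transpose_apply]
  set Pb : ℕ → ℂ := fun a => if a ≤ (i:ℕ) then ((Nat.choose (i:ℕ) a : ℕ):ℂ) * c ^ ((i:ℕ) - a) else 0 with hPb
  set Mn : ℕ → ℕ → ℂ := fun a b =>
    if b < k then (z2 ^ (a + b + 1) - z1 ^ (a + b + 1)) / ((a + b + 1 : ℕ) : ℂ)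
    else (z3 ^ (a + (b - k) + 1) - z1 ^ (a + (b - k) + 1)) / ((a + (b - k) + 1 : ℕ) : ℂ) with hMn
  set Sb : ℕ → ℂ := fun b =>
    if b < k ∧ (j:ℕ) < k then Pblock c b (j:ℕ)
    else if k ≤ b ∧ k ≤ (j:ℕ) then Pblock c (b - k) ((j:ℕ) - k)
    else 0 with hSb
  have hconv : (∑ b : Fin (2*k), (∑ a : Fin (2*k), Pmat k c a i * Mmat k z1 z2 z3 a b) * Pstar k c b j)
      = ∑ b ∈ range (2*k), (∑ a ∈ range (2*k), Pb a * Mn a b) * Sb b := by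
    have e1 : ∀ b : Fin (2*k), (∑ a : Fin (2*k), Pmat k c a i * Mmat k z1 z2 z3 a b)
        = ∑ a ∈ range (2*k), Pb a * Mn a (b:ℕ) := fun b =>
      Fin.sum_univ_eq_sum_range (fun a => Pb a * Mn a (b:ℕ)) (2*k)
    simp only [e1]
    exact Fin.sum_univ_eq_sum_range (fun b => (∑ a ∈ range (2*k), Pb a * Mn a b) * Sb b) (2*k)
  rw [hconv]
  have hi2 : (i:ℕ) < 2*k := i.isLt
  have hj2 : (j:ℕ) < 2*k := j.isLt
  by_cases hj : (j:ℕ) < k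
  · -- first block of columns
    have hLHS : Mmat k (z1+c) (z2+c) (z3+c) i j
        = ∑ a ∈ range ((i:ℕ)+1), ∑ b ∈ range ((j:ℕ)+1),
            ((Nat.choose (i:ℕ) a : ℕ):ℂ) * c^((i:ℕ)-a) *
            ((z2^(a+b+1) - z1^(a+b+1)) / ((a+b+1:ℕ):ℂ)) *
            (((Nat.choose (j:ℕ) b : ℕ):ℂ) * c^((j:ℕ)-b)) := by
      simp only [Mmat, Matrix.of_apply, if_pos hj]
      exact key_aux z2 z1 c (i:ℕ) (j:ℕ)
    rw [hLHS]
    have hbtrunc : ∑ b ∈ range (2*k), (∑ a ∈ range (2*k), Pb a * Mn a b) * Sb b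
        = ∑ b ∈ range ((j:ℕ)+1), (∑ a ∈ range (2*k), Pb a * Mn a b) * Sb b := by
      symm
      apply sum_subset
      · intro b hb; simp only [mem_range] at *; omega
      · intro b hb hb2
        simp only [mem_range] at hb hb2
        have : Sb b = 0 := by
          simp only [hSb, Pblock]
          split_ifs <;> first | rfl | omega
        rw [this, mul_zero]
    rw [hbtrunc]
    rw [Finset.sum_comm]
    apply sum_congr rfl
    intro b hb
    rw [mem_range] at hb
    have hbj : b ≤ (j:ℕ) := by omega
    have hSbv : Sb b = ((Nat.choose (j:ℕ) b : ℕ):ℂ) * c^((j:ℕ)-b) := by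
      simp only [hSb, Pblock]
      rw [if_pos ⟨by omega, hj⟩, if_pos hbj]
    have hatrunc : ∑ a ∈ range (2*k), Pb a * Mn a b = ∑ a ∈ range ((i:ℕ)+1), Pb a * Mn a b := by
      symm
      apply sum_subset
      · intro a ha; simp only [mem_range] at *; omega
      · intro a ha ha2
        simp only [mem_range] at ha ha2
        have : Pb a = 0 := by simp only [hPb]; rw [if_neg (by omega)]
        rw [this, zero_mul]
    rw [hSbv, hatrunc, Finset.sum_mul]
    apply sum_congr rfl
    intro a ha
    rw [mem_range] at ha
    have hPbv : Pb a = ((Nat.choose (i:ℕ) a : ℕ):ℂ) * c^((i:ℕ)-a) := by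
      simp only [hPb]; rw [if_pos (by omega)]
    have hMnv : Mn a b = (z2^(a+b+1) - z1^(a+b+1)) / ((a+b+1:ℕ):ℂ) := by
      simp only [hMn]; rw [if_pos (by omega)]
    rw [hPbv, hMnv]
  · -- second block of columns
    have hjk : k ≤ (j:ℕ) := by omega
    have hLHS : Mmat k (z1+c) (z2+c) (z3+c) i j
        = ∑ a ∈ range ((i:ℕ)+1), ∑ b ∈ range (((j:ℕ)-k)+1),
            ((Nat.choose (i:ℕ) a : ℕ):ℂ) * c^((i:ℕ)-a) *
            ((z3^(a+b+1) - z1^(a+b+1)) / ((a+b+1:ℕ):ℂ)) *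
            (((Nat.choose ((j:ℕ)-k) b : ℕ):ℂ) * c^(((j:ℕ)-k)-b)) := by
      simp only [Mmat, Matrix.of_apply, if_neg hj]
      exact key_aux z3 z1 c (i:ℕ) ((j:ℕ)-k)
    rw [hLHS]
    have hbIcc : ∑ b ∈ range (2*k), (∑ a ∈ range (2*k), Pb a * Mn a b) * Sb b
        = ∑ b ∈ Icc k (j:ℕ), (∑ a ∈ range (2*k), Pb a * Mn a b) * Sb b := by
      symm
      apply sum_subset
      · intro b hb; simp only [mem_Icc, mem_range] at *; omega
      · intro b hb hb2
        simp only [mem_range] at hb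
        simp only [mem_Icc] at hb2
        have : Sb b = 0 := by
          simp only [hSb, Pblock]
          split_ifs <;> first | rfl | omega
        rw [this, mul_zero]
    rw [hbIcc, ← Finset.Ico_add_one_right_eq_Icc, Finset.sum_Ico_eq_sum_range]
    have hrange : (j:ℕ) + 1 - k = ((j:ℕ)-k) + 1 := by omega
    rw [hrange, Finset.sum_comm]
    apply sum_congr rfl
    intro b hb
    rw [mem_range] at hb
    have hbj : b ≤ (j:ℕ) - k := by omega
    have hSbv : Sb (k + b) = ((Nat.choose ((j:ℕ)-k) b : ℕ):ℂ) * c^(((j:ℕ)-k)-b) := by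
      simp only [hSb, Pblock]
      rw [if_neg (by omega), if_pos ⟨by omega, hjk⟩]
      rw [Nat.add_sub_cancel_left] -- (k + b) - k = b
      rw [if_pos hbj]
    have hatrunc : ∑ a ∈ range (2*k), Pb a * Mn a (k+b) = ∑ a ∈ range ((i:ℕ)+1), Pb a * Mn a (k+b) := by
      symm
      apply sum_subset
      · intro a ha; simp only [mem_range] at *; omega
      · intro a ha ha2
        simp only [mem_range] at ha ha2
        have : Pb a = 0 := by simp only [hPb]; rw [if_neg (by omega)]
        rw [this, zero_mul]
    rw [hSbv, hatrunc, Finset.sum_mul]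
    apply sum_congr rfl
    intro a ha
    rw [mem_range] at ha
    have hPbv : Pb a = ((Nat.choose (i:ℕ) a : ℕ):ℂ) * c^((i:ℕ)-a) := by
      simp only [hPb]; rw [if_pos (by omega)]
    have hMnv : Mn a (k+b) = (z3^(a+b+1) - z1^(a+b+1)) / ((a+b+1:ℕ):ℂ) := by
      simp only [hMn]
      rw [if_neg (by omega), Nat.add_sub_cancel_left]
    rw [hPbv, hMnv]
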